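/- Let u_1u_2 be in normal form (λ(u_1) + u_2 = V) and x ∈ Π with λ(u_2) ⊊ x, and let w ∈ Π with (u_2, x, λ(w)) ∈ T''. Then w ≠ λ(u_1) and λ(u_1) ⊊ w does not hold. (Hence the only possibilities are λ(u_1) + w = V, λ(u_1) ⊋ w, or λ(u_1), w distinct nonincident with join ≠ V.) -/
import Mathlib


/-- An abstract finite projective geometry of dimension `n` with an involution `lam`
satisfying `lam (Π_i) = Π_{n+1-i}`, together with an Ã_n-triangle presentation `T`
compatible with `lam`, satisfying axioms (A)–(F) of Cartwright–Shapiro.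
Here `T' = {(u,v,w) ∈ T : dim u + dim v + dim w = n+1}`. -/
structure TrianglePresentation (n : ℕ) (P : Type*) where
  dim : P → ℕ
  incid : P → P → Prop
  lam : P → P
  T : P → P → P → Prop
  incid_symm : ∀ x y, incid x y → incid y x
  lam_invol : Function.Involutive lam
  dim_mem : ∀ x, 1 ≤ dim x ∧ dim x ≤ n
  lam_dim : ∀ x, dim (lam x) = n + 1 - dim x
  /-- Axiom (A): `(u,v,w) ∈ T` for some `w` iff `λ(u)` and `v` are distinct and incident. -/
  axiomA : ∀ u v, (∃ w, T u v w) ↔ (lam u ≠ v ∧ incid (lam u) v)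
  /-- Axiom (B): cyclic invariance. -/
  axiomB : ∀ u v w, T u v w → T v w u
  /-- Axiom (C): uniqueness of the third vertex. -/
  axiomC : ∀ u v w₁ w₂, T u v w₁ → T u v w₂ → w₁ = w₂
  /-- Axiom (D). -/
  axiomD : ∀ u v w, T u v w → T (lam w) (lam v) (lam u)
  /-- Axiom (E). -/
  axiomE : ∀ u v w, T u v w →
    dim u + dim v + dim w = n + 1 ∨ dim u + dim v + dim w = 2 * (n + 1)
  /-- Axiom (F), stated for the half `T'` of `T`. -/
  axiomF : ∀ x y u x' y',
    (T x y u ∧ dim x + dim y + dim u = n + 1) →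
    (T x' y' (lam u) ∧ dim x' + dim y' + dim (lam u) = n + 1) →
    ∃ w, (T y' x w ∧ dim y' + dim x + dim w = n + 1) ∧
         (T y x' (lam w) ∧ dim y + dim x' + dim (lam w) = n + 1)
  /-- For `u, v ∈ Π`, `(u,v,w) ∈ T'` for some `w` iff `λ(u) ⊋ v`. -/
  exists_T' : ∀ u v,
    (∃ w, T u v w ∧ dim u + dim v + dim w = n + 1) ↔
      (lam u ≠ v ∧ incid (lam u) v ∧ dim v < dim (lam u))

namespace TrianglePresentation

variable {n : ℕ} {P : Type*} (TP : TrianglePresentation n P)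

/-- The half `T'` of `T` consisting of triples with dimension sum `n+1`. -/
def T' (u v w : P) : Prop :=
  TP.T u v w ∧ TP.dim u + TP.dim v + TP.dim w = n + 1

/-- `T'' = T \ T'`. -/
def T'' (u v w : P) : Prop :=
  TP.T u v w ∧ ¬ (TP.dim u + TP.dim v + TP.dim w = n + 1)

/-- `x ⊂ y`: `x` is incident with `y` and `dim x ≤ dim y` (or `x = y`). -/
def Sub (x y : P) : Prop :=
  x = y ∨ (TP.incid x y ∧ TP.dim x ≤ TP.dim y)

/-- `x ⊊ y`: proper containment. -/
def PSub (x y : P) : Prop :=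
  TP.Sub x y ∧ x ≠ y

/-- `x + y = V`: no element of `Π` contains both `x` and `y`. -/
def SumV (x y : P) : Prop :=
  ¬ ∃ z, TP.Sub x z ∧ TP.Sub y z

/-- `x + y = c`: `c` is the join of `x` and `y` in the projective geometry. -/
def JoinEq (x y c : P) : Prop :=
  TP.Sub x c ∧ TP.Sub y c ∧ ∀ z, TP.Sub x z → TP.Sub y z → TP.Sub c z

end TrianglePresentation

/-- Lemma 2, case (4), first assertions: if `u₁u₂` is in normal form, `λ(u₂) ⊊ x`, and
`(u₂, x, λ(w)) ∈ T''`, then `w ≠ λ(u₁)` and `λ(u₁) ⊊ w` does not hold. -/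
theorem lemma2_case4_exclusions {n : ℕ} {P : Type*} (TP : TrianglePresentation n P)
    (u₁ u₂ x w : P)
    (hnf : TP.SumV (TP.lam u₁) u₂)
    (hx : TP.PSub (TP.lam u₂) x)
    (hw : TP.T'' u₂ x (TP.lam w)) :
    w ≠ TP.lam u₁ ∧ ¬ TP.PSub (TP.lam u₁) w := by
  obtain ⟨hT, hns⟩ := hw
  have hsum2 : TP.dim u₂ + TP.dim x + TP.dim (TP.lam w) = 2 * (n + 1) :=
    (TP.axiomE _ _ _ hT).resolve_left hns
  -- dual triple is in T'
  have hTd : TP.T w (TP.lam x) (TP.lam u₂) := by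
    have := TP.axiomD _ _ _ hT
    rwa [TP.lam_invol w] at this
  have hdw := TP.dim_mem w
  have hdx := TP.dim_mem x
  have hdu₂ := TP.dim_mem u₂
  have hdlw := TP.dim_mem (TP.lam w)
  have hlw : TP.dim (TP.lam w) = n + 1 - TP.dim w := TP.lam_dim w
  have hlx : TP.dim (TP.lam x) = n + 1 - TP.dim x := TP.lam_dim x
  have hlu₂ : TP.dim (TP.lam u₂) = n + 1 - TP.dim u₂ := TP.lam_dim u₂
  have hlu₁ : TP.dim (TP.lam u₁) = n + 1 - TP.dim u₁ := TP.lam_dim u₁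
  have hdu₁ := TP.dim_mem u₁
  have hdlu₁ := TP.dim_mem (TP.lam u₁)
  have hsumd : TP.dim w + TP.dim (TP.lam x) + TP.dim (TP.lam u₂) = n + 1 := by omega
  have hT'A : TP.T (TP.lam x) (TP.lam u₂) w := TP.axiomB _ _ _ hTd
  have hT'B : TP.T (TP.lam u₂) w (TP.lam x) := TP.axiomB _ _ _ hT'A
  -- w ⊊ u₂
  have hkey := (TP.exists_T' (TP.lam u₂) w).mp ⟨TP.lam x, hT'B, by omega⟩
  rw [TP.lam_invol u₂] at hkey
  obtain ⟨hne, hincid, hdlt⟩ := hkey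
  have hwsub : TP.Sub w u₂ := Or.inr ⟨TP.incid_symm _ _ hincid, le_of_lt hdlt⟩
  constructor
  · rintro rfl
    exact hnf ⟨u₂, hwsub, Or.inl rfl⟩
  · rintro ⟨hsub, hne1⟩
    rcases hsub with h | ⟨hinc1, hle1⟩
    · exact hne1 h
    rcases eq_or_lt_of_le hle1 with heq | hlt1
    · -- equal dimensions: contradiction via axioms A and E
      obtain ⟨w'', hw''⟩ := (TP.axiomA u₁ w).mpr ⟨hne1, hinc1⟩
      have hdw'' := TP.dim_mem w''
      have := TP.axiomE _ _ _ hw''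
      omega
    · -- strict: use exists_T' and axiom F
      obtain ⟨w', hBT, hBs⟩ := (TP.exists_T' (TP.lam w) (TP.lam u₁)).mpr (by
        rw [TP.lam_invol w]
        exact ⟨fun h => hne1 h.symm, TP.incid_symm _ _ hinc1, by omega⟩)
      have hBT' : TP.T (TP.lam u₁) w' (TP.lam w) := TP.axiomB _ _ _ hBT
      obtain ⟨z, _, hz2, hzs⟩ := TP.axiomF (TP.lam x) (TP.lam u₂) w (TP.lam u₁) w'
        ⟨hT'A, by omega⟩ ⟨hBT', by omega⟩
      have hfin := (TP.exists_T' (TP.lam u₂) (TP.lam u₁)).mp ⟨TP.lam z, hz2, hzs⟩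
      rw [TP.lam_invol u₂] at hfin
      obtain ⟨_, hinc2, hlt2⟩ := hfin
      exact hnf ⟨u₂, Or.inr ⟨TP.incid_symm _ _ hinc2, le_of_lt hlt2⟩, Or.inl rfl⟩
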